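/- arXiv:2008.01925 — 2 statements merged into one kernel-verified Lean document; each statement's English description precedes it below -/
import Mathlib

section
/- Let (S, ·) be a layered semigroup with layering map ℓ : S → ℕ and layers S_i = ℓ⁻¹({i}), let F be a locally finite collection of regressive maps on S, and suppose there exists an F-Ramsey sequence (U_i)_{i∈ℕ} of ultrafilters on S. Then for every n, m ∈ ℕ, every r ≥ 1, and every coloring c : S → {0,…,r−1}, there exist x_1,…,x_m ∈ S_n such that for every k ≤ n the set S_k ∩ { f_1(x_{n_1}) · ⋯ · f_ℓ(x_{n_ℓ}) : ℓ ≥ 1, 1 ≤ n_1 < ⋯ < n_ℓ ≤ m, f_1,…,f_ℓ ∈ F } is c-monochromatic (c is constant on it). -/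
/-- A regressive map on a layered semigroup `(S, ·, ℓ)`. -/
def IsRegressive {S : Type*} [Semigroup S] (ℓ : S → ℕ) (f : S → S) : Prop :=
  (∀ s t : S, f (s * t) = f s * f t) ∧
  (∀ s : S, ℓ (f s) ≤ ℓ s) ∧
  (∀ s t : S, ℓ s ≤ ℓ t → ℓ (f s) ≤ ℓ (f t)) ∧
  (∀ s t : S, |(ℓ (f s) : ℤ) - (ℓ (f t) : ℤ)| ≤ |(ℓ s : ℤ) - (ℓ t : ℤ)|)

/-- A collection of maps on `S` is locally finite if for every `i` the set of
restrictions to `ℓ⁻¹({0,…,i})` is finite. -/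
def IsLocallyFinite {S : Type*} (ℓ : S → ℕ) (F : Set (S → S)) : Prop :=
  ∀ i : ℕ, Set.Finite { g : {s : S // ℓ s ≤ i} → S | ∃ f ∈ F, g = fun s => f s.val }

/-- The product of two ultrafilters on a semigroup:
`A ∈ uMul U V ↔ {s | {t | s * t ∈ A} ∈ V} ∈ U`. -/
def uMul {S : Type*} [Semigroup S] (U V : Ultrafilter S) : Ultrafilter S :=
  U.bind fun s => V.map fun t => s * t

/-- A sequence of ultrafilters `U i` concentrated on the layers `S_i` is `F`-coherent if
it is closed under pushforwards along all maps in `F`. -/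
def FCoherent {S : Type*} [Semigroup S] (ℓ : S → ℕ) (F : Set (S → S))
    (U : ℕ → Ultrafilter S) : Prop :=
  (∀ i : ℕ, {s : S | ℓ s = i} ∈ U i) ∧
  (∀ f ∈ F, ∀ j : ℕ, ∃ k ≤ j, Ultrafilter.map f (U j) = U k)

/-- An `F`-coherent sequence is `F`-Ramsey if moreover `U j · U i = U i · U j = U j`
whenever `i ≤ j`. -/
def FRamsey {S : Type*} [Semigroup S] (ℓ : S → ℕ) (F : Set (S → S))
    (U : ℕ → Ultrafilter S) : Prop :=
  FCoherent ℓ F U ∧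
  ∀ i j : ℕ, i ≤ j → uMul (U j) (U i) = U j ∧ uMul (U i) (U j) = U j

/-- Fold of a nonempty tuple from the left: `g 0 * g 1 * ⋯ * g m`. -/
def finFold {S : Type*} (op : S → S → S) (m : ℕ) (g : Fin (m + 1) → S) : S :=
  (List.ofFn fun a : Fin m => g a.succ).foldl op (g 0)

/-- The set of all products `f₁(x_{n₁}) · ⋯ · f_ℓ(x_{n_ℓ})` with `ℓ ≥ 1`,
`n₁ < ⋯ < n_ℓ` and `f₁, …, f_ℓ ∈ F`. -/
def ComboSet {S : Type*} [Semigroup S] (F : Set (S → S)) (x : ℕ → S) : Set S :=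
  { s | ∃ (m : ℕ) (idx : Fin (m + 1) → ℕ) (fs : Fin (m + 1) → S → S),
      StrictMono idx ∧ (∀ a, fs a ∈ F) ∧
      s = finFold (· * ·) m fun a => fs a (x (idx a)) }

/-- The set of all products `f₁(x_{n₁}) · ⋯ · f_ℓ(x_{n_ℓ})` with `ℓ ≥ 1`,
`n₁ < ⋯ < n_ℓ` indices of the finite tuple `x`, and `f₁, …, f_ℓ ∈ F`. -/
def ComboSetFin {S : Type*} [Semigroup S] (F : Set (S → S)) {m : ℕ}
    (x : Fin m → S) : Set S :=
  { s | ∃ (l : ℕ) (idx : Fin (l + 1) → Fin m) (fs : Fin (l + 1) → S → S),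
      StrictMono idx ∧ (∀ a, fs a ∈ F) ∧
      s = finFold (· * ·) l fun a => fs a (x (idx a)) }

lemma finFold_zero' {S : Type*} (op : S → S → S) (g : Fin 1 → S) :
    finFold op 0 g = g 0 := by
  simp [finFold]

lemma finFold_succ' {S : Type*} (op : S → S → S) {l : ℕ} (g : Fin (l + 1 + 1) → S) :
    finFold op (l + 1) g
      = op (finFold op l (fun a => g a.castSucc)) (g (Fin.last (l + 1))) := by
  unfold finFold
  rw [List.ofFn_succ' (fun a : Fin (l + 1) => g a.succ), List.concat_eq_append,
    List.foldl_concat]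
  simp [Fin.succ_castSucc, Fin.succ_last, -Fin.castSucc_succ]

/-- If a layered semigroup `(S, ℓ)` with a locally finite collection `F` of regressive
maps admits an `F`-Ramsey sequence of ultrafilters, then for every `n, m`, every finite
coloring of `S` admits a finite tuple `x₁, …, x_m ∈ S_n` all of whose combinations lying
in a layer `S_k` with `k ≤ n` form a monochromatic set. -/
theorem ramsey_statement_finite {S : Type*} [Semigroup S] (ℓ : S → ℕ)
    (hlay : ∀ s t : S, ℓ (s * t) = max (ℓ s) (ℓ t))
    (F : Set (S → S)) (hreg : ∀ f ∈ F, IsRegressive ℓ f)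
    (hlf : IsLocallyFinite ℓ F)
    (U : ℕ → Ultrafilter S) (hU : FRamsey ℓ F U)
    (n m r : ℕ) (hr : 1 ≤ r) (c : S → Fin r) :
    ∃ x : Fin m → S, (∀ i, ℓ (x i) = n) ∧
      ∀ k ≤ n, ∀ y ∈ {s : S | ℓ s = k} ∩ ComboSetFin F x,
        ∀ z ∈ {s : S | ℓ s = k} ∩ ComboSetFin F x, c y = c z := by
  classical
  obtain ⟨⟨hUlay, hUcoh⟩, hUmul⟩ := hU
  have hmul : ∀ i j : ℕ, uMul (U i) (U j) = U (max i j) := by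
    intro i j
    rcases le_total i j with h | h
    · rw [max_eq_right h]; exact (hUmul i j h).2
    · rw [max_eq_left h]; exact (hUmul j i h).1
  -- choose the dominant color on each layer
  have hcol : ∀ k : ℕ, ∃ e : Fin r, {s : S | c s = e} ∈ U k := by
    intro k
    have huniv : (⋃ e ∈ (Set.univ : Set (Fin r)), {s : S | c s = e}) ∈ U k := by
      have h : (⋃ e ∈ (Set.univ : Set (Fin r)), {s : S | c s = e}) = Set.univ := by
        ext s; simp
      rw [h]; exact Filter.univ_mem
    rcases (Ultrafilter.finite_biUnion_mem_iff Set.finite_univ).mp huniv with ⟨e, _, he⟩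
    exact ⟨e, he⟩
  choose ε hε using hcol
  set A : Set S := {s | ℓ s ≤ n ∧ c s = ε (ℓ s)} with hAdef
  have hA : ∀ k ≤ n, A ∈ U k := by
    intro k hk
    have hm := Filter.inter_mem (hUlay k) (hε k)
    refine Filter.mem_of_superset hm ?_
    rintro s ⟨h1, h2⟩
    have h1' : ℓ s = k := h1
    exact ⟨by rw [h1']; exact hk, by rw [h1']; exact h2⟩
  set Astar : Set S := ⋂ k ∈ Set.Iic n, {s : S | {t | s * t ∈ A} ∈ U k} with hAstardef
  have hAstar_mem : ∀ k ≤ n, Astar ∈ U k := by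
    intro k hk
    rw [hAstardef]
    refine (Filter.biInter_mem (Set.finite_Iic n)).mpr ?_
    intro k' hk'
    have hAm : A ∈ uMul (U k) (U k') := by
      rw [hmul k k']; exact hA _ (max_le hk hk')
    exact hAm
  -- membership in Astar, unfolded
  have hAstar_iff : ∀ y : S, y ∈ Astar ↔ ∀ k ≤ n, {t | y * t ∈ A} ∈ U k := by
    intro y
    rw [hAstardef]
    simp [Set.mem_iInter]
  -- the star lemma
  have hstar : ∀ y ∈ Astar, ∀ k ≤ n, {t | y * t ∈ A ∩ Astar} ∈ U k := by
    intro y hy k hk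
    have hyk : ∀ k' ≤ n, {t | y * t ∈ A} ∈ U k' := (hAstar_iff y).mp hy
    have h1 : {t | y * t ∈ A} ∈ U k := hyk k hk
    have h2 : {t | y * t ∈ Astar} ∈ U k := by
      have heq : {t : S | y * t ∈ Astar}
          = ⋂ k' ∈ Set.Iic n, {t : S | {u | (y * t) * u ∈ A} ∈ U k'} := by
        ext t
        rw [Set.mem_setOf_eq, hAstar_iff]
        simp [Set.mem_iInter]
      rw [heq]
      refine (Filter.biInter_mem (Set.finite_Iic n)).mpr ?_
      intro k' hk'
      have hB : {v : S | y * v ∈ A} ∈ uMul (U k) (U k') := by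
        rw [hmul k k']; exact hyk _ (max_le hk hk')
      have hB' : {t : S | {u : S | t * u ∈ {v | y * v ∈ A}} ∈ U k'} ∈ U k := hB
      have heq2 : {t : S | {u : S | t * u ∈ {v | y * v ∈ A}} ∈ U k'}
          = {t : S | {u : S | (y * t) * u ∈ A} ∈ U k'} := by
        ext t
        have h3 : {u : S | t * u ∈ {v | y * v ∈ A}} = {u : S | (y * t) * u ∈ A} := by
          ext u; simp only [Set.mem_setOf_eq, mul_assoc]
        rw [Set.mem_setOf_eq, Set.mem_setOf_eq, h3]
      rw [heq2] at hB'
      exact hB'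
    have := Filter.inter_mem h1 h2
    exact this
  set A' : Set S := A ∩ Astar with hA'def
  have hA' : ∀ k ≤ n, A' ∈ U k := fun k hk => Filter.inter_mem (hA k hk) (hAstar_mem k hk)
  set R : Set ({s : S // ℓ s ≤ n} → S) :=
    { g | ∃ f ∈ F, g = fun s => f s.val } with hRdef
  have hRfin : R.Finite := hlf n
  -- the one-step choice
  have hchoice : ∀ C : Set S, C.Finite → C ⊆ Astar →
      ∃ x : S, ℓ x = n ∧ ∀ f ∈ F, f x ∈ A' ∧ ∀ y ∈ C, y * f x ∈ A' := by
    intro C hCfin hCsub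
    set T : Set S := A' ∩ ⋂ y ∈ C, {t | y * t ∈ A'} with hTdef
    have hT : ∀ k ≤ n, T ∈ U k := by
      intro k hk
      refine Filter.inter_mem (hA' k hk) ?_
      refine (Filter.biInter_mem hCfin).mpr ?_
      intro y hy
      exact hstar y (hCsub hy) k hk
    set E : ({s : S // ℓ s ≤ n} → S) → Set S := fun g =>
      if h : ∃ f ∈ F, g = fun s => f s.val then h.choose ⁻¹' T else Set.univ with hEdef
    have hEmem : ∀ g ∈ R, E g ∈ U n := by
      intro g hg
      have h : ∃ f ∈ F, g = fun s => f s.val := hg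
      rw [hEdef]
      simp only []
      rw [dif_pos h]
      obtain ⟨hfF, hgf⟩ := h.choose_spec
      obtain ⟨k, hk, hmap⟩ := hUcoh _ hfF n
      have hTm : T ∈ Ultrafilter.map h.choose (U n) := by rw [hmap]; exact hT k hk
      exact Ultrafilter.mem_map.mp hTm
    have hbig : ({s : S | ℓ s = n} ∩ ⋂ g ∈ R, E g) ∈ U n := by
      refine Filter.inter_mem (hUlay n) ?_
      exact (Filter.biInter_mem hRfin).mpr hEmem
    obtain ⟨x, hx1, hx2⟩ := Ultrafilter.nonempty_of_mem hbig
    have hx1' : ℓ x = n := hx1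
    refine ⟨x, hx1', ?_⟩
    intro f hf
    have hgR : (fun s : {s : S // ℓ s ≤ n} => f s.val) ∈ R := ⟨f, hf, rfl⟩
    have h : ∃ f' ∈ F, (fun s : {s : S // ℓ s ≤ n} => f s.val) = fun s => f' s.val := hgR
    have hxE : x ∈ E (fun s : {s : S // ℓ s ≤ n} => f s.val) :=
      Set.mem_iInter₂.mp hx2 _ hgR
    rw [hEdef] at hxE
    simp only [] at hxE
    rw [dif_pos h] at hxE
    have hfx : f x = h.choose x := by
      have := congrFun h.choose_spec.2 ⟨x, hx1'.le⟩
      exact this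
    rw [Set.mem_preimage, ← hfx] at hxE
    obtain ⟨hxA', hxC⟩ := hxE
    exact ⟨hxA', fun y hy => Set.mem_iInter₂.mp hxC y hy⟩
  -- finiteness of combo sets
  have hfinC : ∀ (j : ℕ) (x : Fin j → S), (∀ i, ℓ (x i) = n) → (ComboSetFin F x).Finite := by
    intro j x hx
    set V : Set S := Set.image2
      (fun (g : {s : S // ℓ s ≤ n} → S) (i : Fin j) => g ⟨x i, (hx i).le⟩)
      R Set.univ with hVdef
    have hVfin : V.Finite := Set.Finite.image2 _ hRfin Set.finite_univ
    have hV : ∀ f ∈ F, ∀ i, f (x i) ∈ V := by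
      intro f hf i
      exact ⟨fun s => f s.val, ⟨f, hf, rfl⟩, i, Set.mem_univ i, rfl⟩
    have hsub : ComboSetFin F x ⊆ ⋃ l ∈ Finset.range j,
        (fun h : Fin (l + 1) → S => finFold (· * ·) l h) '' (Set.univ.pi fun _ => V) := by
      rintro s ⟨l, idx, fs, hmono, hfs, rfl⟩
      have hlj : l + 1 ≤ j := by
        have := Fintype.card_le_of_injective idx hmono.injective
        simpa using this
      refine Set.mem_iUnion₂.mpr ⟨l, Finset.mem_range.mpr (Nat.lt_of_succ_le hlj),
        ⟨fun a => fs a (x (idx a)), fun a _ => hV _ (hfs a) _, rfl⟩⟩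
    refine Set.Finite.subset ?_ hsub
    refine Set.Finite.biUnion (Finset.range j).finite_toSet ?_
    intro l _
    exact Set.Finite.image _ (Set.Finite.pi fun _ => hVfin)
  -- the main inductive construction
  have hmain : ∀ j : ℕ, ∃ x : Fin j → S, (∀ i, ℓ (x i) = n) ∧ ComboSetFin F x ⊆ A' := by
    intro j
    induction j with
    | zero =>
        refine ⟨Fin.elim0, fun i => i.elim0, ?_⟩
        rintro s ⟨l, idx, fs, hmono, hfs, rfl⟩
        exact (idx 0).elim0
    | succ j ih =>
        obtain ⟨x, hx, hcomb⟩ := ih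
        have hCfin := hfinC j x hx
        have hCsub : ComboSetFin F x ⊆ Astar := fun s hs => (hcomb hs).2
        obtain ⟨w, hw, hwprop⟩ := hchoice _ hCfin hCsub
        refine ⟨Fin.snoc x w, ?_, ?_⟩
        · intro i
          rcases eq_or_ne i (Fin.last j) with h | h
          · rw [h, Fin.snoc_last]; exact hw
          · rw [← Fin.castSucc_castPred i h, Fin.snoc_castSucc]; exact hx _
        · rintro s ⟨l, idx, fs, hmono, hfs, rfl⟩
          by_cases hlast : idx (Fin.last l) = Fin.last j
          · cases l with
            | zero =>
                rw [finFold_zero']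
                have h0 : idx 0 = Fin.last j := hlast
                rw [h0, Fin.snoc_last]
                exact (hwprop _ (hfs 0)).1
            | succ l' =>
                rw [finFold_succ']
                have hne : ∀ a : Fin (l' + 1), idx a.castSucc ≠ Fin.last j := by
                  intro a
                  have hlt := hmono (Fin.castSucc_lt_last a)
                  rw [hlast] at hlt
                  exact ne_of_lt hlt
                have hval : ∀ a : Fin (l' + 1),
                    (Fin.snoc x w : Fin (j+1) → S) (idx a.castSucc) = x ((idx a.castSucc).castPred (hne a)) := by
                  intro a
                  conv_lhs => rw [← Fin.castSucc_castPred (idx a.castSucc) (hne a)]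
                  rw [Fin.snoc_castSucc]
                have hfeq : (fun a : Fin (l' + 1) => fs a.castSucc ((Fin.snoc x w : Fin (j+1) → S) (idx a.castSucc)))
                    = fun a => fs a.castSucc (x ((idx a.castSucc).castPred (hne a))) := by
                  funext a; rw [hval a]
                have hy : finFold (· * ·) l'
                    (fun a => fs a.castSucc ((Fin.snoc x w : Fin (j+1) → S) (idx a.castSucc))) ∈ ComboSetFin F x := by
                  refine ⟨l', fun a => (idx a.castSucc).castPred (hne a), fun a => fs a.castSucc,
                    ?_, fun a => hfs _, ?_⟩
                  · intro a b hab
                    have h2 : idx a.castSucc < idx b.castSucc :=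
                      hmono (Fin.castSucc_lt_castSucc_iff.mpr hab)
                    simp only [Fin.lt_def, Fin.coe_castPred] at h2 ⊢
                    exact h2
                  · rw [hfeq]
                rw [show idx (Fin.last (l' + 1)) = Fin.last j from hlast, Fin.snoc_last]
                exact (hwprop _ (hfs (Fin.last (l' + 1)))).2 _ hy
          · have hne : ∀ a : Fin (l + 1), idx a ≠ Fin.last j := by
              intro a hcontra
              apply hlast
              have h1 : idx a ≤ idx (Fin.last l) := hmono.monotone (Fin.le_last a)
              exact le_antisymm (Fin.le_last _) (hcontra ▸ h1)
            have hval : ∀ a : Fin (l + 1),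
                (Fin.snoc x w : Fin (j+1) → S) (idx a) = x ((idx a).castPred (hne a)) := by
              intro a
              conv_lhs => rw [← Fin.castSucc_castPred (idx a) (hne a)]
              rw [Fin.snoc_castSucc]
            have hfeq : (fun a : Fin (l + 1) => fs a ((Fin.snoc x w : Fin (j+1) → S) (idx a)))
                = fun a => fs a (x ((idx a).castPred (hne a))) := by
              funext a; rw [hval a]
            refine hcomb ⟨l, fun a => (idx a).castPred (hne a), fs, ?_, hfs, ?_⟩
            · intro a b hab
              have h2 : idx a < idx b := hmono hab
              simp only [Fin.lt_def, Fin.coe_castPred] at h2 ⊢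
              exact h2
            · rw [hfeq]
  obtain ⟨x, hx, hcomb⟩ := hmain m
  refine ⟨x, hx, ?_⟩
  intro k hk y hy z hz
  obtain ⟨hyk, hyC⟩ := hy
  obtain ⟨hzk, hzC⟩ := hz
  have h1 := (hcomb hyC).1
  have h2 := (hcomb hzC).1
  have hyk' : ℓ y = k := hyk
  have hzk' : ℓ z = k := hzk
  rw [h1.2, h2.2, hyk', hzk']
end

section
/- Let (S, ·) be a layered semigroup with layering map ℓ : S → ℕ and layers S_i = ℓ⁻¹({i}), let F be a collection of regressive maps on S, and let (U_i)_{i∈ℕ} be an F-coherent sequence of ultrafilters on S such that every U_i is idempotent (U_i·U_i = U_i). Then for every f ∈ F and every k ∈ ℕ there exists j ≤ k such that the pushforward ultrafilter Ultrafilter.map f (U_k · U_{k−1} · ⋯ · U_1 · U_0) equals U_j · U_{j−1} · ⋯ · U_1 · U_0 (products of ultrafilters taken in the indicated order). -/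
/-- The iterated product `U_k · U_{k-1} · ⋯ · U_1 · U_0` of a sequence of ultrafilters. -/
def iterProd {S : Type*} [Semigroup S] (U : ℕ → Ultrafilter S) : ℕ → Ultrafilter S
  | 0 => U 0
  | k + 1 => uMul (U (k + 1)) (iterProd U (k))

lemma mem_uMul {S : Type*} [Semigroup S] {U V : Ultrafilter S} {A : Set S} :
    A ∈ uMul U V ↔ {s | {t | s * t ∈ A} ∈ V} ∈ U := by
  simp [uMul, Ultrafilter.bind, Ultrafilter.mem_map, Filter.mem_bind']
  rfl

lemma uMul_assoc {S : Type*} [Semigroup S] (U V W : Ultrafilter S) :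
    uMul (uMul U V) W = uMul U (uMul V W) := by
  ext A
  simp only [mem_uMul, Set.mem_setOf_eq]
  constructor <;> intro h <;> filter_upwards [h] <;> intro s hs <;>
    { have := hs; simp only [Set.mem_setOf_eq, mul_assoc] at this ⊢; exact this }

lemma map_uMul {S : Type*} [Semigroup S] (f : S → S)
    (hf : ∀ s t : S, f (s * t) = f s * f t) (U V : Ultrafilter S) :
    Ultrafilter.map f (uMul U V) = uMul (Ultrafilter.map f U) (Ultrafilter.map f V) := by
  ext A
  simp only [Ultrafilter.mem_map, mem_uMul, Set.preimage_setOf_eq, Set.mem_setOf_eq,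
    Set.mem_preimage, hf]

/-- If `(U_i)` is an `F`-coherent sequence of idempotent ultrafilters on a layered
semigroup, then for every `f ∈ F` and every `k` there is `j ≤ k` with
`map f (U_k · U_{k-1} · ⋯ · U_0) = U_j · U_{j-1} · ⋯ · U_0`. -/
theorem map_iterProd_of_coherent_idempotent {S : Type*} [Semigroup S] (ℓ : S → ℕ)
    (hlay : ∀ s t : S, ℓ (s * t) = max (ℓ s) (ℓ t))
    (F : Set (S → S)) (hreg : ∀ f ∈ F, IsRegressive ℓ f)
    (U : ℕ → Ultrafilter S) (hcoh : FCoherent ℓ F U)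
    (hid : ∀ i, uMul (U i) (U i) = U i) :
    ∀ f ∈ F, ∀ k : ℕ, ∃ j ≤ k,
      Ultrafilter.map f (iterProd U k) = iterProd U j := by
  intro f hf k
  obtain ⟨hhom, -, hmono, hlip⟩ := hreg f hf
  choose m hm hmap using hcoh.2 f hf
  have key : ∀ i : ℕ, ∃ s : S, ℓ s = i ∧ ℓ (f s) = m i := by
    intro i
    have h1 : {s : S | ℓ s = i} ∈ U i := hcoh.1 i
    have h2 : {s : S | ℓ (f s) = m i} ∈ U i := by
      have h3 : {s : S | ℓ s = m i} ∈ Ultrafilter.map f (U i) := by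
        rw [hmap i]; exact hcoh.1 (m i)
      exact Ultrafilter.mem_map.mp h3
    obtain ⟨s, hs1, hs2⟩ := Ultrafilter.nonempty_of_mem (Filter.inter_mem h1 h2)
    exact ⟨s, hs1, hs2⟩
  have mstep : ∀ i, m i ≤ m (i + 1) ∧ m (i + 1) ≤ m i + 1 := by
    intro i
    obtain ⟨s, hs1, hs2⟩ := key i
    obtain ⟨t, ht1, ht2⟩ := key (i + 1)
    constructor
    · have := hmono s t (by omega)
      omega
    · have := hlip t s
      rw [hs1, hs2, ht1, ht2] at this
      have h4 : |((i + 1 : ℕ) : ℤ) - (i : ℤ)| = 1 := by push_cast; simp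
      rw [h4, abs_le] at this
      omega
  have m0 : m 0 = 0 := Nat.le_zero.mp (hm 0)
  have absorb : ∀ j, uMul (U j) (iterProd U j) = iterProd U j := by
    intro j
    cases j with
    | zero => exact hid 0
    | succ p =>
      show uMul (U (p+1)) (uMul (U (p+1)) (iterProd U p)) = _
      rw [← uMul_assoc, hid (p+1)]
      rfl
  suffices h : ∀ k, Ultrafilter.map f (iterProd U k) = iterProd U (m k) from
    ⟨m k, hm k, h k⟩
  intro k
  induction k with
  | zero => show Ultrafilter.map f (U 0) = _; rw [hmap 0, m0]; rfl
  | succ n ih =>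
    have hstep := mstep n
    have heq : Ultrafilter.map f (iterProd U (n + 1))
        = uMul (U (m (n + 1))) (iterProd U (m n)) := by
      show Ultrafilter.map f (uMul (U (n+1)) (iterProd U n)) = _
      rw [map_uMul f hhom, hmap (n + 1), ih]
    rw [heq]
    rcases Nat.lt_or_ge (m n) (m (n + 1)) with h | h
    · have h5 : m (n + 1) = m n + 1 := by omega
      rw [h5]; rfl
    · have h5 : m (n + 1) = m n := by omega
      rw [h5, absorb]
end
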